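/- If (a,b) is a primitive solution of x^2 + 7^{2k+1} = y^4 (i.e., a^2 + 7^{2k+1} = b^4 with gcd(a,b)=1, a ≠ 0), then 2b^2 = 7^{2k+1} + 1. -/
import Mathlib


/-- If `(a,b)` is a primitive solution of `x^2 + 7^(2k+1) = y^4`, then `2b^2 = 7^(2k+1) + 1`. -/
theorem stmt_5 (a b : ℤ) (k : ℕ) (hcop : IsCoprime a b) (ha : a ≠ 0)
    (heq : a ^ 2 + 7 ^ (2 * k + 1) = b ^ 4) :
    2 * b ^ 2 = 7 ^ (2 * k + 1) + 1 := by
  set n := 2 * k + 1 with hn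
  set u := b ^ 2 - a with hu
  set v := b ^ 2 + a with hv
  have hmul : u * v = 7 ^ n := by rw [hu, hv]; linarith [heq]
  have hsum : u + v = 2 * b ^ 2 := by ring
  have h7 : Prime (7 : ℤ) := by norm_num
  have hpos : 0 < u * v := by
    rw [hmul]; positivity
  have husum : 0 ≤ u + v := by rw [hsum]; positivity
  have hupos : 0 < u ∧ 0 < v := by
    rcases (mul_pos_iff.mp hpos) with ⟨h1, h2⟩ | ⟨h1, h2⟩
    · exact ⟨h1, h2⟩
    · exfalso; linarith
  -- not both divisible by 7
  have hnot : ¬ ((7 : ℤ) ∣ u ∧ (7 : ℤ) ∣ v) := by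
    rintro ⟨d1, d2⟩
    have h2b : (7 : ℤ) ∣ 2 * b ^ 2 := hsum ▸ dvd_add d1 d2
    have h2a : (7 : ℤ) ∣ 2 * a := by
      have : v - u = 2 * a := by ring
      exact this ▸ dvd_sub d2 d1
    have hb : (7 : ℤ) ∣ b := by
      have := (h7.dvd_mul.mp h2b).resolve_left (by norm_num)
      exact h7.dvd_of_dvd_pow this
    have haa : (7 : ℤ) ∣ a := (h7.dvd_mul.mp h2a).resolve_left (by norm_num)
    have := hcop.isUnit_of_dvd' haa hb
    rw [Int.isUnit_iff] at this
    omega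
  have key : ∀ w z : ℤ, w * z = 7 ^ n → 0 < w → ¬ (7 : ℤ) ∣ w → w = 1 := by
    intro w z hwz hw hnd
    have hcw : IsCoprime w (7 ^ n) :=
      ((h7.coprime_iff_not_dvd.mpr hnd).symm).pow_right
    have hdvd : w ∣ 7 ^ n := ⟨z, hwz.symm⟩
    have := hcw.isUnit_of_dvd' dvd_rfl hdvd
    rw [Int.isUnit_iff] at this
    omega
  by_cases hd : (7 : ℤ) ∣ u
  · have hndv : ¬ (7 : ℤ) ∣ v := fun h => hnot ⟨hd, h⟩
    have hv1 : v = 1 := key v u (by linarith [hmul, mul_comm u v]) hupos.2 hndv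
    have hu7 : u = 7 ^ n := by
      have := hmul
      rw [hv1, mul_one] at this
      exact this
    linarith [hsum]
  · have hu1 : u = 1 := key u v hmul hupos.1 hd
    have hv7 : v = 7 ^ n := by
      have := hmul
      rw [hu1, one_mul] at this
      exact this
    linarith [hsum]
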